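/- With the parameters of the refinement of the third Levenshtein bound, the Krawtchouk expansion f(t) = f_0 + f_1 Q_1^{(n,q)}(t) + f_2 Q_2^{(n,q)}(t) + f_3 Q_3^{(n,q)}(t) of the cubic f has coefficients f_3 = 8(q-1)³(n-2)(n-1)/(q³n²), f_2 = 8(q-1)²(n-1)A/(q³n²(q+j-1)), f_1 = 8(q-1)((eq-B)² + C)/(q³n²), and f_0 = 8(a²(2-q-j) + Da + E)/(q³n³), where A = -j² + (2eq-1)j + (q-1)(2n+2eq+q-4), B = [j(j-2) - n(q-1) + (q/2)(3j+q-1)]/(j+q-1), and C = -j² + (2-q)j + (3n-2)(q-1) - q²/4. -/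

import Mathlib

/-- Generalized binomial coefficient `C(x,j) = x(x-1)⋯(x-j+1)/j!` as a function of a real `x`. -/
noncomputable def genChoose (x : ℝ) (j : ℕ) : ℝ :=
  (descPochhammer ℝ j).eval x / (Nat.factorial j : ℝ)

/-- The `q`-ary Krawtchouk polynomial `K_i^{(n,q)}(x)`. -/
noncomputable def kraw (n q i : ℕ) (x : ℝ) : ℝ :=
  ∑ j ∈ Finset.range (i + 1),
    (-1 : ℝ) ^ j * ((q : ℝ) - 1) ^ (i - j) * genChoose x j * genChoose ((n : ℝ) - x) (i - j)

/-- The normalized Krawtchouk polynomial `Q_i^{(n,q)}(t) = K_i^{(n,q)}(n(1-t)/2)/r_i`,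
with `r_i = (q-1)^i C(n,i)`. -/
noncomputable def normKraw (n q i : ℕ) (t : ℝ) : ℝ :=
  kraw n q i ((n : ℝ) * (1 - t) / 2) / (((q : ℝ) - 1) ^ i * (n.choose i : ℝ))

lemma kraw_one (n q : ℕ) (x : ℝ) : kraw n q 1 x = ((q:ℝ)-1)*((n:ℝ)-x) - x := by
  simp [kraw, genChoose, Finset.sum_range_succ, descPochhammer_succ_eval, Nat.factorial]
  all_goals ring

lemma kraw_two (n q : ℕ) (x : ℝ) : kraw n q 2 x =
    ((q:ℝ)-1)^2*(((n:ℝ)-x)*((n:ℝ)-x-1)/2) - ((q:ℝ)-1)*x*((n:ℝ)-x) + x*(x-1)/2 := by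
  simp [kraw, genChoose, Finset.sum_range_succ, show (2:ℕ)=1+1 from rfl,
    descPochhammer_succ_eval, Nat.factorial]
  all_goals ring

lemma kraw_three (n q : ℕ) (x : ℝ) : kraw n q 3 x =
    ((q:ℝ)-1)^3*(((n:ℝ)-x)*((n:ℝ)-x-1)*((n:ℝ)-x-2)/6)
    - ((q:ℝ)-1)^2*x*(((n:ℝ)-x)*((n:ℝ)-x-1)/2)
    + ((q:ℝ)-1)*(x*(x-1)/2)*((n:ℝ)-x) - x*(x-1)*(x-2)/6 := by
  simp [kraw, genChoose, Finset.sum_range_succ, show (3:ℕ)=2+1 from rfl,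
    show (2:ℕ)=1+1 from rfl, descPochhammer_succ_eval, Nat.factorial]
  all_goals ring

lemma cast_choose_three' {n : ℕ} (h : 3 ≤ n) :
    ((n.choose 3 : ℕ) : ℝ) = (n : ℝ) * ((n : ℝ) - 1) * ((n : ℝ) - 2) / 6 := by
  obtain ⟨m, rfl⟩ := Nat.exists_eq_add_of_le h
  have h1 := Nat.descFactorial_eq_factorial_mul_choose (3 + m) 3
  simp [Nat.descFactorial, Nat.factorial] at h1
  have h2 : 3 + m - 2 = 1 + m := by omega
  rw [h2] at h1
  have := congrArg (fun k : ℕ => (k : ℝ)) h1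
  push_cast at this ⊢
  linarith

set_option maxHeartbeats 2000000 in
/-- The Krawtchouk expansion of the refining cubic for the third Levenshtein bound:
`f(t) = f₀ + f₁ Q₁ + f₂ Q₂ + f₃ Q₃` with the explicit coefficient formulas. -/
theorem stmt1 (n q : ℕ) (hq : 2 ≤ q) (hnq : q ≤ n) (d : ℕ) (hd : 1 ≤ d)
    (j : ℝ) (hj : j = (q : ℝ) * ((n : ℝ) - 1 - (d : ℝ)) - ((n : ℝ) - 2))
    (hj0 : 0 ≤ j)
    (hjS : j < (Real.sqrt ((q : ℝ) ^ 2 + 4 * ((q : ℝ) - 1) * ((n : ℝ) - 2)) - (q : ℝ)) / 2)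
    (s : ℝ) (hs : s = 1 - 2 * (d : ℝ) / (n : ℝ))
    (d0 : ℝ) (hd0 : d0 = (n : ℝ) - j * ((n : ℝ) - 1) / ((q : ℝ) * (j + (q : ℝ) - 1)))
    (e : ℝ) (he0 : 0 < e) (he1 : e ≤ 1) (heint : ∃ k : ℤ, d0 + e = (k : ℝ))
    (A B Cc D E a : ℝ)
    (hA : A = -j ^ 2 + (2 * e * (q : ℝ) - 1) * j +
      ((q : ℝ) - 1) * (2 * (n : ℝ) + 2 * e * (q : ℝ) + (q : ℝ) - 4))
    (hB : B = (j * (j - 2) - (n : ℝ) * ((q : ℝ) - 1) +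
      ((q : ℝ) / 2) * (3 * j + (q : ℝ) - 1)) / (j + (q : ℝ) - 1))
    (hC : Cc = -j ^ 2 + (2 - (q : ℝ)) * j + (3 * (n : ℝ) - 2) * ((q : ℝ) - 1) - (q : ℝ) ^ 2 / 4)
    (hD : D = (j + (q : ℝ) - 1) * (2 * (n : ℝ) * ((q : ℝ) - 1) - (q : ℝ)) + (q : ℝ))
    (hE : E = -(n : ℝ) * ((n : ℝ) - 1) * ((q : ℝ) - 1) ^ 2 * (j + (q : ℝ)))
    (ha : a = ((n : ℝ) - 1) * ((q : ℝ) - 1) * ((q : ℝ) + j) / ((q : ℝ) + j - 1) + e * (q : ℝ)) :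
    ∀ t : ℝ,
      (t - 1 + 2 * (d0 + e) / (n : ℝ)) * (t - 1 + 2 * (d0 + e - 1) / (n : ℝ)) * (t - s) =
        8 * (a ^ 2 * (2 - (q : ℝ) - j) + D * a + E) / ((q : ℝ) ^ 3 * (n : ℝ) ^ 3) +
        (8 * ((q : ℝ) - 1) * ((e * (q : ℝ) - B) ^ 2 + Cc) / ((q : ℝ) ^ 3 * (n : ℝ) ^ 2)) *
          normKraw n q 1 t +
        (8 * ((q : ℝ) - 1) ^ 2 * ((n : ℝ) - 1) * A /
          ((q : ℝ) ^ 3 * (n : ℝ) ^ 2 * ((q : ℝ) + j - 1))) * normKraw n q 2 t +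
        (8 * ((q : ℝ) - 1) ^ 3 * ((n : ℝ) - 2) * ((n : ℝ) - 1) /
          ((q : ℝ) ^ 3 * (n : ℝ) ^ 2)) * normKraw n q 3 t := by
  intro t
  have hqR : (2:ℝ) ≤ (q:ℝ) := by exact_mod_cast hq
  have hn3 : 3 ≤ n := by
    by_contra h
    have hn2 : n = 2 := by omega
    have hq2 : q = 2 := by omega
    subst hn2; subst hq2
    rw [show ((2:ℕ):ℝ) ^ 2 + 4 * (((2:ℕ):ℝ) - 1) * (((2:ℕ):ℝ) - 2) = 2 ^ 2 by norm_num,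
      Real.sqrt_sq (by norm_num)] at hjS
    norm_num at hjS
    linarith
  have hnR : (3:ℝ) ≤ (n:ℝ) := by exact_mod_cast hn3
  have hq0 : (q:ℝ) ≠ 0 := by linarith
  have hq1 : (q:ℝ) - 1 ≠ 0 := by linarith
  have hn0 : (n:ℝ) ≠ 0 := by linarith
  have hn1 : (n:ℝ) - 1 ≠ 0 := by linarith
  have hn2' : (n:ℝ) - 2 ≠ 0 := by linarith
  have hw : (q:ℝ) + j - 1 ≠ 0 := by linarith
  have hjq : j + (q:ℝ) - 1 ≠ 0 := by linarith
  have hdq : (d:ℝ) = ((q:ℝ) * ((n:ℝ) - 1) - ((n:ℝ) - 2) - j) / (q:ℝ) := by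
    field_simp
    linarith [hj]
  -- abbreviations (as plain terms)
  -- w = q + j - 1
  -- numerators
  have hQ1 : normKraw n q 1 t = ((q:ℝ)*t + (q:ℝ) - 2)/(2*((q:ℝ)-1)) := by
    rw [normKraw, kraw_one, Nat.choose_one_right]
    field_simp
    ring
  have hQ2 : normKraw n q 2 t =
      (((q:ℝ)-1)^2*((((n:ℝ)-((n:ℝ)*(1-t)/2))*(((n:ℝ)-((n:ℝ)*(1-t)/2))-1)/2))
        - ((q:ℝ)-1)*((n:ℝ)*(1-t)/2)*((n:ℝ)-((n:ℝ)*(1-t)/2))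
        + ((n:ℝ)*(1-t)/2)*(((n:ℝ)*(1-t)/2)-1)/2)
      / (((q:ℝ)-1)^2 * ((n:ℝ)*((n:ℝ)-1)/2)) := by
    rw [normKraw, kraw_two, Nat.cast_choose_two]
  have hQ3 : normKraw n q 3 t =
      (((q:ℝ)-1)^3*((((n:ℝ)-((n:ℝ)*(1-t)/2))*(((n:ℝ)-((n:ℝ)*(1-t)/2))-1)*(((n:ℝ)-((n:ℝ)*(1-t)/2))-2)/6))
        - ((q:ℝ)-1)^2*((n:ℝ)*(1-t)/2)*((((n:ℝ)-((n:ℝ)*(1-t)/2))*(((n:ℝ)-((n:ℝ)*(1-t)/2))-1)/2))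
        + ((q:ℝ)-1)*(((n:ℝ)*(1-t)/2)*(((n:ℝ)*(1-t)/2)-1)/2)*((n:ℝ)-((n:ℝ)*(1-t)/2))
        - ((n:ℝ)*(1-t)/2)*(((n:ℝ)*(1-t)/2)-1)*(((n:ℝ)*(1-t)/2)-2)/6)
      / (((q:ℝ)-1)^3 * ((n:ℝ)*((n:ℝ)-1)*((n:ℝ)-2)/6)) := by
    rw [normKraw, kraw_three, cast_choose_three' hn3]
  have hF1 : t - 1 + 2 * (d0 + e) / (n : ℝ) = ((q:ℝ)*((q:ℝ)+j-1)*(n:ℝ)*(t-1) + 2*(q:ℝ)*((q:ℝ)+j-1)*(n:ℝ) - 2*j*((n:ℝ)-1) + 2*e*(q:ℝ)*((q:ℝ)+j-1)) / ((q:ℝ)*((q:ℝ)+j-1)*(n:ℝ)) := by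
    rw [hd0]; field_simp; ring
  have hF2 : t - 1 + 2 * (d0 + e - 1) / (n : ℝ) = ((q:ℝ)*((q:ℝ)+j-1)*(n:ℝ)*(t-1) + 2*(q:ℝ)*((q:ℝ)+j-1)*(n:ℝ) - 2*j*((n:ℝ)-1) + 2*e*(q:ℝ)*((q:ℝ)+j-1) - 2*(q:ℝ)*((q:ℝ)+j-1)) / ((q:ℝ)*((q:ℝ)+j-1)*(n:ℝ)) := by
    rw [hd0]; field_simp; ring
  have hF3 : t - s = ((q:ℝ)*(n:ℝ)*(t-1) + 2*((q:ℝ)*((n:ℝ)-1)-((n:ℝ)-2)-j)) / ((q:ℝ)*(n:ℝ)) := by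
    rw [hs, hdq]; field_simp; ring
  have hT0 : 8 * (a ^ 2 * (2 - (q : ℝ) - j) + D * a + E) / ((q : ℝ) ^ 3 * (n : ℝ) ^ 3) =
      (8 * ((((n:ℝ)-1)*((q:ℝ)-1)*((q:ℝ)+j) + e*(q:ℝ)*((q:ℝ)+j-1))^2 * (2-(q:ℝ)-j) + ((j+(q:ℝ)-1)*(2*(n:ℝ)*((q:ℝ)-1)-(q:ℝ))+(q:ℝ)) * (((n:ℝ)-1)*((q:ℝ)-1)*((q:ℝ)+j) + e*(q:ℝ)*((q:ℝ)+j-1)) * ((q:ℝ)+j-1) + (-(n:ℝ)*((n:ℝ)-1)*((q:ℝ)-1)^2*(j+(q:ℝ))) * ((q:ℝ)+j-1)^2)) / ((q:ℝ)^3 * (n:ℝ)^3 * ((q:ℝ)+j-1)^2) := by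
    rw [ha, hD, hE]; field_simp
  have hT1 : (8 * ((q : ℝ) - 1) * ((e * (q : ℝ) - B) ^ 2 + Cc) / ((q : ℝ) ^ 3 * (n : ℝ) ^ 2)) *
        normKraw n q 1 t = (4 * (n:ℝ) * ((e*(q:ℝ)*((q:ℝ)+j-1) - (j*(j-2) - (n:ℝ)*((q:ℝ)-1) + ((q:ℝ)/2)*(3*j+(q:ℝ)-1)))^2 + (-j^2 + (2-(q:ℝ))*j + (3*(n:ℝ)-2)*((q:ℝ)-1) - (q:ℝ)^2/4) * ((q:ℝ)+j-1)^2) * ((q:ℝ)*t + (q:ℝ) - 2)) / ((q:ℝ)^3 * (n:ℝ)^3 * ((q:ℝ)+j-1)^2) := by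
    rw [hQ1, hB, hC]; field_simp; ring
  have hT2 : (8 * ((q : ℝ) - 1) ^ 2 * ((n : ℝ) - 1) * A /
        ((q : ℝ) ^ 3 * (n : ℝ) ^ 2 * ((q : ℝ) + j - 1))) * normKraw n q 2 t =
      (16 * (-j^2 + (2*e*(q:ℝ)-1)*j + ((q:ℝ)-1)*(2*(n:ℝ)+2*e*(q:ℝ)+(q:ℝ)-4)) * (((q:ℝ)-1)^2*((((n:ℝ)-((n:ℝ)*(1-t)/2))*(((n:ℝ)-((n:ℝ)*(1-t)/2))-1)/2)) - ((q:ℝ)-1)*((n:ℝ)*(1-t)/2)*((n:ℝ)-((n:ℝ)*(1-t)/2)) + ((n:ℝ)*(1-t)/2)*(((n:ℝ)*(1-t)/2)-1)/2) * ((q:ℝ)+j-1)) / ((q:ℝ)^3 * (n:ℝ)^3 * ((q:ℝ)+j-1)^2) := by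
    rw [hQ2, hA]; field_simp; ring
  have hT3 : (8 * ((q : ℝ) - 1) ^ 3 * ((n : ℝ) - 2) * ((n : ℝ) - 1) /
        ((q : ℝ) ^ 3 * (n : ℝ) ^ 2)) * normKraw n q 3 t =
      (48 * (((q:ℝ)-1)^3*((((n:ℝ)-((n:ℝ)*(1-t)/2))*(((n:ℝ)-((n:ℝ)*(1-t)/2))-1)*(((n:ℝ)-((n:ℝ)*(1-t)/2))-2)/6)) - ((q:ℝ)-1)^2*((n:ℝ)*(1-t)/2)*((((n:ℝ)-((n:ℝ)*(1-t)/2))*(((n:ℝ)-((n:ℝ)*(1-t)/2))-1)/2)) + ((q:ℝ)-1)*(((n:ℝ)*(1-t)/2)*(((n:ℝ)*(1-t)/2)-1)/2)*((n:ℝ)-((n:ℝ)*(1-t)/2)) - ((n:ℝ)*(1-t)/2)*(((n:ℝ)*(1-t)/2)-1)*(((n:ℝ)*(1-t)/2)-2)/6) * ((q:ℝ)+j-1)^2) / ((q:ℝ)^3 * (n:ℝ)^3 * ((q:ℝ)+j-1)^2) := by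
    rw [hQ3]; field_simp; ring
  have hden : (((q:ℝ)*((q:ℝ)+j-1)*(n:ℝ)) * ((q:ℝ)*((q:ℝ)+j-1)*(n:ℝ))) * ((q:ℝ)*(n:ℝ)) = ((q:ℝ)^3 * (n:ℝ)^3 * ((q:ℝ)+j-1)^2) := by ring
  have key : (((q:ℝ)*((q:ℝ)+j-1)*(n:ℝ)*(t-1) + 2*(q:ℝ)*((q:ℝ)+j-1)*(n:ℝ) - 2*j*((n:ℝ)-1) + 2*e*(q:ℝ)*((q:ℝ)+j-1)) * ((q:ℝ)*((q:ℝ)+j-1)*(n:ℝ)*(t-1) + 2*(q:ℝ)*((q:ℝ)+j-1)*(n:ℝ) - 2*j*((n:ℝ)-1) + 2*e*(q:ℝ)*((q:ℝ)+j-1) - 2*(q:ℝ)*((q:ℝ)+j-1))) * ((q:ℝ)*(n:ℝ)*(t-1) + 2*((q:ℝ)*((n:ℝ)-1)-((n:ℝ)-2)-j)) = (((8 * ((((n:ℝ)-1)*((q:ℝ)-1)*((q:ℝ)+j) + e*(q:ℝ)*((q:ℝ)+j-1))^2 * (2-(q:ℝ)-j) + ((j+(q:ℝ)-1)*(2*(n:ℝ)*((q:ℝ)-1)-(q:ℝ))+(q:ℝ))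 * (((n:ℝ)-1)*((q:ℝ)-1)*((q:ℝ)+j) + e*(q:ℝ)*((q:ℝ)+j-1)) * ((q:ℝ)+j-1) + (-(n:ℝ)*((n:ℝ)-1)*((q:ℝ)-1)^2*(j+(q:ℝ))) * ((q:ℝ)+j-1)^2)) + (4 * (n:ℝ) * ((e*(q:ℝ)*((q:ℝ)+j-1) - (j*(j-2) - (n:ℝ)*((q:ℝ)-1) + ((q:ℝ)/2)*(3*j+(q:ℝ)-1)))^2 + (-j^2 + (2-(q:ℝ))*j + (3*(n:ℝ)-2)*((q:ℝ)-1) - (q:ℝ)^2/4) * ((q:ℝ)+j-1)^2) * ((q:ℝ)*t + (q:ℝ) - 2))) + (16 * (-j^2 + (2*e*(q:ℝ)-1)*j + ((q:ℝ)-1)*(2*(n:ℝ)+2*e*(q:ℝ)+(q:ℝ)-4)) * (((q:ℝ)-1)^2*((((n:ℝ)-((n:ℝ)*(1-t)/2))*(((n:ℝ)-((n:ℝ)*(1-t)/2))-1)/2)) - ((q:ℝ)-1)*((n:ℝ)*(1-t)/2)*((n:ℝ)-((n:ℝ)*(1-t)/2)) + ((n:ℝ)*(1-t)/2)*(((n:ℝ)*(1-t)/2)-1)/2)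 * ((q:ℝ)+j-1))) + (48 * (((q:ℝ)-1)^3*((((n:ℝ)-((n:ℝ)*(1-t)/2))*(((n:ℝ)-((n:ℝ)*(1-t)/2))-1)*(((n:ℝ)-((n:ℝ)*(1-t)/2))-2)/6)) - ((q:ℝ)-1)^2*((n:ℝ)*(1-t)/2)*((((n:ℝ)-((n:ℝ)*(1-t)/2))*(((n:ℝ)-((n:ℝ)*(1-t)/2))-1)/2)) + ((q:ℝ)-1)*(((n:ℝ)*(1-t)/2)*(((n:ℝ)*(1-t)/2)-1)/2)*((n:ℝ)-((n:ℝ)*(1-t)/2)) - ((n:ℝ)*(1-t)/2)*(((n:ℝ)*(1-t)/2)-1)*(((n:ℝ)*(1-t)/2)-2)/6) * ((q:ℝ)+j-1)^2) := by ring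
  rw [hF1, hF2, hF3, hT0, hT1, hT2, hT3, ← add_div, ← add_div, ← add_div,
    div_mul_div_comm, div_mul_div_comm, hden, key]
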